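/- In the conjoint model where with probability q the respondent is independent (so Y | X,Z ~ Bernoulli(0.5) regardless of X), and otherwise P(Y=0 | X=(x₀,x₁), Z) equals 0.5 if x₀=x₁, equals p if x₀ matches the respondent's party and x₁ does not, and equals 1-p otherwise, with X=(X⁰,X¹) uniform on the four party pairs {D,R}² independent of Z, the expected total variation E[TV(L(Y|X,Z), L(Y|Z))] equals (1-q)|p - 0.5|. -/

import Mathlib

open MeasureTheory

/- In the conjoint model (respondent independent with probability q; otherwise
P(Y=0|X=(x₀,x₁),Z) is 1/2 if x₀=x₁, p if x₀ matches the respondent's party, 1-p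
otherwise; X uniform on the four party pairs), the expected total variation, scaled
by the ETV normalization (1-1/2)⁻¹ = 2, equals (1-q)|p-1/2|. Here g z x = P(Y=0|X=x,Z=z),
P(Y=0|Z=z) = 1/2, and TV(L(Y|X,Z),L(Y|Z)) = |g - 1/2| for binary Y. -/
open Classical in
theorem stmt14 {𝒵 : Type*} [MeasurableSpace 𝒵] (P : Measure 𝒵) [IsProbabilityMeasure P]
    (ind : Set 𝒵) (hind : MeasurableSet ind)
    (party : 𝒵 → Bool) (hparty : Measurable party)
    (q p : ℝ) (hq01 : q ∈ Set.Icc (0:ℝ) 1) (hp01 : p ∈ Set.Icc (0:ℝ) 1)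
    (hq : P ind = ENNReal.ofReal q)
    (g : 𝒵 → Bool × Bool → ℝ)
    (hg : ∀ z x, g z x = if z ∈ ind then 1/2 else if x.1 = x.2 then 1/2
        else if x.1 = party z then p else 1 - p) :
    2 * ∫ z, (1/4) * ∑ x : Bool × Bool, |g z x - 1/2| ∂P = (1 - q) * |p - 1/2| := by
  have hfun : (fun z => (1/4 : ℝ) * ∑ x : Bool × Bool, |g z x - 1/2|) =
      Set.indicator indᶜ (fun _ => |p - 1/2| / 2) := by
    funext z
    by_cases hz : z ∈ ind
    · simp [Set.indicator_of_notMem, hz, hg]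
    · rw [Set.indicator_of_mem (by simpa using hz)]
      have : ∑ x : Bool × Bool, |g z x - 1/2| = 2 * |p - 1/2| := by
        simp only [Fintype.sum_prod_type, hg, hz, if_false]
        cases party z <;> simp <;> rw [show |1 - p - 2⁻¹| = |p - 2⁻¹| by rw [abs_sub_comm]; ring_nf] <;> ring
      rw [this]; ring
  rw [hfun, integral_indicator_const _ hind.compl]
  have h1 : P indᶜ = ENNReal.ofReal (1 - q) := by
    rw [prob_compl_eq_one_sub hind, hq]
    rw [ENNReal.ofReal_sub _ hq01.1]
    simp
  rw [measureReal_def, h1, ENNReal.toReal_ofReal (by linarith [hq01.2])]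
  simp; ring
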